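/- For all π, π' ∈ S_n with the same skeleton and any higher-order twisted stack-sorting operator 𝔰 = ν_m ∘ ⋯ ∘ ν_1 with each ν_j ∈ {s, rev} and ν_1 = s, we have |𝔰⁻¹(π)| = |𝔰⁻¹(π')|. -/

import Mathlib

/-- `l` is a permutation of `{1, …, n}`, written as a word. -/
def IsPermList (n : ℕ) (l : List ℕ) : Prop := l.Perm (List.range' 1 n)

/-- The word obtained from `l` by exchanging the positions of the entries `i` and `i+1`. -/
def swapEntries (i : ℕ) (l : List ℕ) : List ℕ :=
  l.map fun x => if x = i then i + 1 else if x = i + 1 then i else x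

/-- Some entry larger than `i+1` appears (strictly) between the entries `i` and `i+1`
in the word `l`. -/
def ToggleApplies (i : ℕ) (l : List ℕ) : Prop :=
  ∃ a ∈ l, i + 1 < a ∧
    min (l.idxOf i) (l.idxOf (i + 1)) < l.idxOf a ∧
    l.idxOf a < max (l.idxOf i) (l.idxOf (i + 1))

open scoped Classical in
/-- The polyurethane toggle `p i`. -/
noncomputable def toggle (i : ℕ) (l : List ℕ) : List ℕ :=
  if ToggleApplies i l then swapEntries i l else l

lemma max_getD_mem (l : List ℕ) (h : l ≠ []) : l.max?.getD 0 ∈ l := by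
  rcases hm : l.max? with _ | m'
  · exact absurd (List.max?_eq_none_iff.mp hm) h
  · simpa using List.max?_mem hm

lemma length_takeWhile_lt (p : ℕ → Bool) (l : List ℕ) (x : ℕ) (hx : x ∈ l) (hpx : p x = false) :
    (l.takeWhile p).length < l.length := by
  rcases Nat.lt_or_ge (l.takeWhile p).length l.length with h | h
  · exact h
  · have := List.takeWhile_eq_self_iff.mp ((List.takeWhile_sublist p).eq_of_length_le h) x hx
    rw [hpx] at this; exact absurd this (by simp)

lemma length_dropWhile_tail_lt (p : ℕ → Bool) (l : List ℕ) (h : l ≠ []) :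
    ((l.dropWhile p).tail).length < l.length := by
  have h1 : (l.dropWhile p).length ≤ l.length := (List.dropWhile_sublist _).length_le
  have h2 : ((l.dropWhile p).tail).length ≤ (l.dropWhile p).length - 1 := by
    simp [List.length_tail]
  have : 0 < l.length := List.length_pos_iff.mpr h
  omega

/-- West's stack-sorting map `s`: `s([]) = []` and `s(LmR) = s(L) s(R) m`,
where `m` is the largest entry. -/
def stackSort : List ℕ → List ℕ
  | [] => []
  | a :: rest =>
    stackSort ((a :: rest).takeWhile (· ≠ (a :: rest).max?.getD 0)) ++
      stackSort (((a :: rest).dropWhile (· ≠ (a :: rest).max?.getD 0)).tail) ++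
      [(a :: rest).max?.getD 0]
termination_by l => l.length
decreasing_by
  · exact length_takeWhile_lt _ _ _ (max_getD_mem (a :: rest) (by simp)) (by simp)
  · exact length_dropWhile_tail_lt _ _ (by simp)

/-- The inverse of the permutation `l` of `{1, …, n}`, as a word: its `k`-th entry is the
position (1-indexed) of the entry `k` in `l`. -/
def invw (l : List ℕ) : List ℕ := (List.range' 1 l.length).map fun k => l.idxOf k + 1

/-- The composition `l · m` of permutations written as words: `(l · m) j = l (m j)`. -/
def compw (l m : List ℕ) : List ℕ := m.map fun k => l.getD (k - 1) 0

/-- The group element `π⁻¹ · s(π)`, which encodes the skeleton of `π`: two permutations of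
`{1, …, n}` have the same skeleton if and only if their `skel`s coincide. -/
def skel (l : List ℕ) : List ℕ := compw (invw l) (stackSort l)

/-- equation lemma -/
lemma stackSort_eq (l : List ℕ) (h : l ≠ []) :
    stackSort l = stackSort (l.takeWhile (· ≠ l.max?.getD 0)) ++
      stackSort ((l.dropWhile (· ≠ l.max?.getD 0)).tail) ++ [l.max?.getD 0] := by
  cases l with
  | nil => exact absurd rfl h
  | cons a rest => rw [stackSort]

lemma nat_max?_eq_some_iff {l : List ℕ} {a : ℕ} :
    l.max? = some a ↔ a ∈ l ∧ ∀ b ∈ l, b ≤ a :=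
  List.max?_eq_some_iff

lemma takeWhile_ne_of_lt (A B : List ℕ) (c : ℕ) (hA : ∀ x ∈ A, x < c) :
    (A ++ c :: B).takeWhile (· ≠ c) = A := by
  induction A with
  | nil => simp
  | cons a t ih =>
    have h : a ≠ c := Nat.ne_of_lt (hA a (by simp))
    have e : ((a :: t) ++ c :: B).takeWhile (· ≠ c) = a :: (t ++ c :: B).takeWhile (· ≠ c) := by
      simp [List.takeWhile_cons, h]
    rw [e, ih (fun x hx => hA x (List.mem_cons_of_mem _ hx))]

lemma dropWhile_ne_of_lt (A B : List ℕ) (c : ℕ) (hA : ∀ x ∈ A, x < c) :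
    (A ++ c :: B).dropWhile (· ≠ c) = c :: B := by
  induction A with
  | nil => simp
  | cons a t ih =>
    have h : a ≠ c := Nat.ne_of_lt (hA a (by simp))
    have : ((a :: t) ++ c :: B).dropWhile (· ≠ c) = (t ++ c :: B).dropWhile (· ≠ c) := by
      simp [List.dropWhile_cons, h]
    rw [this, ih (fun x hx => hA x (List.mem_cons_of_mem _ hx))]

lemma max_of_split (A B : List ℕ) (c : ℕ) (hA : ∀ x ∈ A, x < c) (hB : ∀ x ∈ B, x < c) :
    (A ++ c :: B).max? = some c := by
  rw [nat_max?_eq_some_iff]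
  refine ⟨by simp, ?_⟩
  intro b hb
  rcases List.mem_append.mp hb with h | h
  · exact le_of_lt (hA b h)
  · rcases List.mem_cons.mp h with h | h
    · omega
    · exact le_of_lt (hB b h)

/-- The main splitting lemma. -/
lemma stackSort_split (A B : List ℕ) (c : ℕ) (hA : ∀ x ∈ A, x < c) (hB : ∀ x ∈ B, x < c) :
    stackSort (A ++ c :: B) = stackSort A ++ stackSort B ++ [c] := by
  have hmax : (A ++ c :: B).max?.getD 0 = c := by rw [max_of_split A B c hA hB]; rfl
  rw [stackSort_eq (A ++ c :: B) (by simp), hmax, takeWhile_ne_of_lt A B c hA,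
    dropWhile_ne_of_lt A B c hA]
  rfl

/-- Custom induction principle for nodup lists, following the stackSort recursion. -/
theorem maxRec {P : List ℕ → Prop} (h0 : P [])
    (hstep : ∀ A c B, (∀ x ∈ A, x < c) → (∀ x ∈ B, x < c) → (A ++ c :: B).Nodup →
      P A → P B → P (A ++ c :: B)) :
    ∀ l : List ℕ, l.Nodup → P l := by
  have H : ∀ N (l : List ℕ), l.length ≤ N → l.Nodup → P l := by
    intro N
    induction N with
    | zero => intro l hl _; rw [List.length_eq_zero_iff.mp (Nat.le_zero.mp hl)]; exact h0
    | succ N ih =>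
      intro l hl hnd
      rcases eq_or_ne l [] with rfl | hne
      · exact h0
      · set c := l.max?.getD 0 with hc
        have hcm : l.max? = some c := by
          rcases hm : l.max? with _ | m
          · exact absurd (List.max?_eq_none_iff.mp hm) hne
          · rw [hc, hm]; rfl
        have hmem : c ∈ l ∧ ∀ b ∈ l, b ≤ c := nat_max?_eq_some_iff.mp hcm
        set A := l.takeWhile (· ≠ c) with hA
        set B := (l.dropWhile (· ≠ c)).tail with hB
        have hne2 : l.dropWhile (· ≠ c) ≠ [] := by
          intro h
          have := List.dropWhile_eq_nil_iff.mp h c hmem.1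
          simp at this
        have hdw : l.dropWhile (· ≠ c) = c :: B := by
          have h1 := List.cons_head_tail hne2
          have h2 : (l.dropWhile (· ≠ c)).head hne2 = c := by
            have := List.head_dropWhile_not (· ≠ c) hne2
            simpa using this
          rw [h2] at h1
          exact h1.symm
        have hsplit : l = A ++ c :: B := by rw [hA, ← hdw, List.takeWhile_append_dropWhile]
        have hAmem : ∀ x ∈ A, x < c := by
          intro x hx
          have h1 : x ≠ c := by
            have := List.mem_takeWhile_imp hx; simpa using this
          have h2 : x ≤ c := hmem.2 x ((List.takeWhile_sublist _).mem hx)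
          omega
        have hBmem : ∀ x ∈ B, x < c := by
          intro x hx
          have hxl : x ∈ l := by
            rw [hsplit]; exact List.mem_append.mpr (Or.inr (List.mem_cons_of_mem _ hx))
          have h2 : x ≤ c := hmem.2 x hxl
          have h1 : x ≠ c := by
            intro h
            subst h
            exact (List.nodup_cons.mp (List.nodup_append'.mp (hsplit ▸ hnd)).2.1).1 hx
          omega
        have hlen : A.length + (c :: B).length = l.length := by
          rw [hsplit, List.length_append]
        simp only [List.length_cons] at hlen
        rw [hsplit]
        exact hstep A c B hAmem hBmem (hsplit ▸ hnd)
          (ih A (by omega) ((hsplit ▸ hnd).sublist (by simp)))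
          (ih B (by omega) ((hsplit ▸ hnd).sublist
            ((List.sublist_cons_self c B).trans (List.sublist_append_right A (c::B)))))
  exact fun l hnd => H l.length l le_rfl hnd
/-! ### Basic facts -/

lemma stackSort_perm : ∀ l : List ℕ, l.Nodup → (stackSort l).Perm l := by
  refine maxRec ?_ ?_
  · simp [stackSort]
  · intro A c B hA hB _ ihA ihB
    rw [stackSort_split A B c hA hB]
    refine ((ihA.append ihB).append_right [c]).trans ?_
    rw [List.append_assoc]
    exact (List.perm_append_singleton c B).append_left A

lemma IsPermList.nodup {n : ℕ} {l : List ℕ} (h : IsPermList n l) : l.Nodup :=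
  h.nodup_iff.mpr (List.nodup_range')

lemma IsPermList.length {n : ℕ} {l : List ℕ} (h : IsPermList n l) : l.length = n := by
  simpa using h.length_eq

lemma IsPermList.mem_iff_le {n : ℕ} {l : List ℕ} (h : IsPermList n l) {x : ℕ} :
    x ∈ l ↔ 1 ≤ x ∧ x ≤ n := by
  rw [List.Perm.mem_iff h, List.mem_range'_1]; omega

lemma stackSort_isPermList {n : ℕ} {l : List ℕ} (h : IsPermList n l) :
    IsPermList n (stackSort l) := (stackSort_perm l h.nodup).trans h

lemma reverse_isPermList {n : ℕ} {l : List ℕ} (h : IsPermList n l) :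
    IsPermList n l.reverse := (List.reverse_perm l).trans h

/-- The value-swapping function. -/
def swapFun (i : ℕ) (x : ℕ) : ℕ := if x = i then i + 1 else if x = i + 1 then i else x

lemma swapEntries_eq_map (i : ℕ) (l : List ℕ) : swapEntries i l = l.map (swapFun i) := rfl

lemma swapFun_swapFun (i x : ℕ) : swapFun i (swapFun i x) = x := by
  unfold swapFun; split_ifs <;> omega

lemma swapFun_injective (i : ℕ) : Function.Injective (swapFun i) := by
  intro a b h
  have := congrArg (swapFun i) h
  rwa [swapFun_swapFun, swapFun_swapFun] at this

lemma swapEntries_swapEntries (i : ℕ) (l : List ℕ) : swapEntries i (swapEntries i l) = l := by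
  rw [swapEntries_eq_map, swapEntries_eq_map, List.map_map]
  have : swapFun i ∘ swapFun i = id := funext (swapFun_swapFun i)
  rw [this, List.map_id]

lemma indexOf_map_of_injective {f : ℕ → ℕ} (hf : Function.Injective f) (l : List ℕ) (a : ℕ) :
    (l.map f).idxOf (f a) = l.idxOf a := by
  induction l with
  | nil => rfl
  | cons b t ih =>
    rw [List.map_cons, List.idxOf_cons, List.idxOf_cons]
    by_cases h : b = a
    · subst h; simp
    · have : (f b == f a) = false := by
        simp only [beq_eq_false_iff_ne, ne_eq]
        exact fun hc => h (hf hc)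
      rw [this]
      have : (b == a) = false := by simpa using h
      rw [this]
      simp [ih]

lemma indexOf_swapEntries_self (i : ℕ) (l : List ℕ) :
    (swapEntries i l).idxOf (i + 1) = l.idxOf i := by
  have h := indexOf_map_of_injective (swapFun_injective i) l i
  rw [swapEntries_eq_map]
  simpa [swapFun] using h

lemma indexOf_swapEntries_succ (i : ℕ) (l : List ℕ) :
    (swapEntries i l).idxOf i = l.idxOf (i + 1) := by
  have h := indexOf_map_of_injective (swapFun_injective i) l (i + 1)
  rw [swapEntries_eq_map]
  have e : swapFun i (i + 1) = i := by simp [swapFun]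
  rwa [e] at h

lemma indexOf_swapEntries_other (i a : ℕ) (l : List ℕ) (h1 : a ≠ i) (h2 : a ≠ i + 1) :
    (swapEntries i l).idxOf a = l.idxOf a := by
  have h := indexOf_map_of_injective (swapFun_injective i) l a
  rw [swapEntries_eq_map]
  have e : swapFun i a = a := by simp [swapFun, h1, h2]
  rwa [e] at h

lemma swapEntries_isPermList {n i : ℕ} {l : List ℕ} (h : IsPermList n l)
    (h1 : 1 ≤ i) (h2 : i + 1 ≤ n) : IsPermList n (swapEntries i l) := by
  unfold IsPermList
  refine ((h.map (swapFun i))).trans ?_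
  apply List.perm_of_nodup_nodup_toFinset_eq
  · exact (List.nodup_range').map (swapFun_injective i)
  · exact List.nodup_range'
  · ext x
    simp only [List.mem_toFinset, List.mem_map, List.mem_range'_1]
    constructor
    · rintro ⟨y, ⟨hy1, hy2⟩, rfl⟩
      unfold swapFun; split_ifs <;> omega
    · intro hx
      refine ⟨swapFun i x, ?_, swapFun_swapFun i x⟩
      unfold swapFun; split_ifs <;> omega

/-- Sep: synonym analysis of ToggleApplies. -/
lemma toggleApplies_swapEntries_iff (i : ℕ) (l : List ℕ) :
    ToggleApplies i (swapEntries i l) ↔ ToggleApplies i l := by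
  have key : ∀ m : List ℕ, ToggleApplies i m → ToggleApplies i (swapEntries i m) := by
    intro m ⟨a, ham, hai, h1, h2⟩
    refine ⟨a, ?_, hai, ?_, ?_⟩
    · rw [swapEntries_eq_map]
      have : a = swapFun i a := by unfold swapFun; split_ifs <;> omega
      rw [this]; exact List.mem_map_of_mem ham
    · rw [indexOf_swapEntries_self, indexOf_swapEntries_succ,
        indexOf_swapEntries_other i a m (by omega) (by omega), Nat.min_comm]
      exact h1
    · rw [indexOf_swapEntries_self, indexOf_swapEntries_succ,
        indexOf_swapEntries_other i a m (by omega) (by omega), Nat.max_comm]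
      exact h2
  constructor
  · intro h
    have := key _ h
    rwa [swapEntries_swapEntries] at this
  · exact key l
/-! ### Pattern lemma and toggle localization -/

lemma stackSort_map_mono (f : ℕ → ℕ) :
    ∀ l : List ℕ, l.Nodup → (∀ a ∈ l, ∀ b ∈ l, (a < b ↔ f a < f b)) →
      stackSort (l.map f) = (stackSort l).map f := by
  refine maxRec ?_ ?_
  · intro _; simp [stackSort]
  · intro A c B hA hB hnd ihA ihB hf
    have hcl : c ∈ A ++ c :: B := by simp
    have hmemA : ∀ x ∈ A, x ∈ A ++ c :: B := fun x hx => by simp [hx]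
    have hmemB : ∀ x ∈ B, x ∈ A ++ c :: B := fun x hx => by simp [hx]
    have hfA : ∀ x ∈ A.map f, x < f c := by
      rintro x hx
      obtain ⟨a, ha, rfl⟩ := List.mem_map.mp hx
      exact (hf a (hmemA a ha) c hcl).mp (hA a ha)
    have hfB : ∀ x ∈ B.map f, x < f c := by
      rintro x hx
      obtain ⟨a, ha, rfl⟩ := List.mem_map.mp hx
      exact (hf a (hmemB a ha) c hcl).mp (hB a ha)
    rw [List.map_append, List.map_cons, stackSort_split _ _ _ hfA hfB,
      stackSort_split _ _ _ hA hB, List.map_append, List.map_append,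
      ihA (fun a ha b hb => hf a (hmemA a ha) b (hmemA b hb)),
      ihB (fun a ha b hb => hf a (hmemB a ha) b (hmemB b hb))]
    rfl

lemma indexOf_ge_of_not_mem {a : ℕ} {X : List ℕ} (h : a ∉ X) (Y : List ℕ) :
    X.length ≤ (X ++ Y).idxOf a := by
  rw [List.idxOf_append_of_notMem h]; omega

lemma mem_left_of_indexOf_lt {a : ℕ} {X Y : List ℕ} (ha : a ∈ X ++ Y)
    (h : (X ++ Y).idxOf a < X.length) : a ∈ X := by
  by_contra hc
  exact absurd h (not_lt.mpr (indexOf_ge_of_not_mem hc Y))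

lemma toggleApplies_append_left {i : ℕ} {X : List ℕ} (Y : List ℕ)
    (hi : i ∈ X) (hi1 : i + 1 ∈ X) :
    ToggleApplies i (X ++ Y) ↔ ToggleApplies i X := by
  rw [ToggleApplies, ToggleApplies, List.idxOf_append_of_mem hi,
    List.idxOf_append_of_mem hi1]
  have hmax : max (X.idxOf i) (X.idxOf (i + 1)) < X.length :=
    max_lt (List.idxOf_lt_length_iff.mpr hi) (List.idxOf_lt_length_iff.mpr hi1)
  constructor
  · rintro ⟨a, ha, hlt, h1, h2⟩
    have haX : a ∈ X := mem_left_of_indexOf_lt ha (h2.trans hmax)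
    exact ⟨a, haX, hlt, by rwa [List.idxOf_append_of_mem haX] at h1,
      by rwa [List.idxOf_append_of_mem haX] at h2⟩
  · rintro ⟨a, ha, hlt, h1, h2⟩
    exact ⟨a, List.mem_append_left Y ha, hlt, by rwa [List.idxOf_append_of_mem ha],
      by rwa [List.idxOf_append_of_mem ha]⟩

lemma toggleApplies_append_right {i : ℕ} {X Y : List ℕ} (hnd : (X ++ Y).Nodup)
    (hi : i ∈ Y) (hi1 : i + 1 ∈ Y) :
    ToggleApplies i (X ++ Y) ↔ ToggleApplies i Y := by
  have hdisj : ∀ a ∈ Y, a ∉ X := by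
    intro a haY haX
    exact (List.disjoint_of_nodup_append hnd) haX haY
  have hiX : i ∉ X := hdisj i hi
  have hi1X : i + 1 ∉ X := hdisj (i + 1) hi1
  rw [ToggleApplies, ToggleApplies, List.idxOf_append_of_notMem hiX,
    List.idxOf_append_of_notMem hi1X]
  constructor
  · rintro ⟨a, ha, hlt, h1, h2⟩
    have haY : a ∈ Y := by
      rcases List.mem_append.mp ha with h | h
      · exfalso
        rw [List.idxOf_append_of_mem h] at h1
        have : X.idxOf a < X.length := List.idxOf_lt_length_iff.mpr h
        omega
      · exact h
    rw [List.idxOf_append_of_notMem (hdisj a haY)] at h1 h2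
    exact ⟨a, haY, hlt, by omega, by omega⟩
  · rintro ⟨a, ha, hlt, h1, h2⟩
    refine ⟨a, List.mem_append_right X ha, hlt, ?_, ?_⟩ <;>
      rw [List.idxOf_append_of_notMem (hdisj a ha)] <;> omega
/-! ### Lemmas A and B: interaction of stackSort with value swaps -/

lemma indexOf_cons_ne' {c v : ℕ} (B : List ℕ) (h : c ≠ v) :
    (c :: B).idxOf v = B.idxOf v + 1 := List.idxOf_cons_ne B h

lemma map_swapFun_eq_self {i : ℕ} {l : List ℕ} (hi : i ∉ l) (hi1 : i + 1 ∉ l) :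
    l.map (swapFun i) = l := by
  have : ∀ a ∈ l, swapFun i a = id a := by
    intro a ha
    have h1 : a ≠ i := fun h => hi (h ▸ ha)
    have h2 : a ≠ i + 1 := fun h => hi1 (h ▸ ha)
    simp [swapFun, h1, h2]
  rw [List.map_congr_left this, List.map_id]

lemma swapFun_mono_of_not_mem {i : ℕ} {l : List ℕ} (h : i ∉ l ∨ i + 1 ∉ l) :
    ∀ a ∈ l, ∀ b ∈ l, (a < b ↔ swapFun i a < swapFun i b) := by
  intro a ha b hb
  rcases h with h | h
  · have h1 : a ≠ i := fun hc => h (hc ▸ ha)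
    have h2 : b ≠ i := fun hc => h (hc ▸ hb)
    unfold swapFun; split_ifs <;> omega
  · have h1 : a ≠ i + 1 := fun hc => h (hc ▸ ha)
    have h2 : b ≠ i + 1 := fun hc => h (hc ▸ hb)
    unfold swapFun; split_ifs <;> omega

/-- Lemma B: if the toggle applies to `l`, stack-sorting commutes with swapping `i, i+1`. -/
lemma stackSort_swapEntries :
    ∀ l : List ℕ, l.Nodup → ∀ i : ℕ, i ∈ l → i + 1 ∈ l → ToggleApplies i l →
      stackSort (swapEntries i l) = swapEntries i (stackSort l) := by
  refine maxRec ?_ ?_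
  · intro i hi _ _; exact absurd hi List.not_mem_nil
  · intro A c B hA hB hnd ihA ihB i hi hi1 hsep
    have hndA : A.Nodup := (List.nodup_append'.mp hnd).1
    have hndcB : (c :: B).Nodup := (List.nodup_append'.mp hnd).2.1
    have hndB : B.Nodup := hndcB.of_cons
    have hdisj : A.Disjoint (c :: B) := List.disjoint_of_nodup_append hnd
    have hcB : c ∉ B := (List.nodup_cons.mp hndcB).1
    -- c is not i nor i+1
    rcases eq_or_ne c (i + 1) with rfl | hci1
    · exfalso
      obtain ⟨a, ha, hlt, _, _⟩ := hsep
      rcases List.mem_append.mp ha with h | h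
      · exact absurd (hA a h) (by omega)
      · rcases List.mem_cons.mp h with rfl | h
        · omega
        · exact absurd (hB a h) (by omega)
    rcases eq_or_ne c i with rfl | hci
    · exfalso
      rcases List.mem_append.mp hi1 with h | h
      · exact absurd (hA _ h) (by omega)
      · rcases List.mem_cons.mp h with h | h
        · omega
        · exact absurd (hB _ h) (by omega)
    have hiAB : i ∈ A ∨ i ∈ B := by
      rcases List.mem_append.mp hi with h | h
      · exact Or.inl h
      · rcases List.mem_cons.mp h with h | h
        · exact absurd h.symm hci
        · exact Or.inr h
    have hi1AB : i + 1 ∈ A ∨ i + 1 ∈ B := by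
      rcases List.mem_append.mp hi1 with h | h
      · exact Or.inl h
      · rcases List.mem_cons.mp h with h | h
        · exact absurd h.symm hci1
        · exact Or.inr h
    have hic : i < c := by
      rcases hiAB with h | h
      · exact hA _ h
      · exact hB _ h
    have hi1c : i + 1 < c := by
      rcases hi1AB with h | h
      · exact hA _ h
      · exact hB _ h
    have hfc : swapFun i c = c := by simp [swapFun, hci, hci1]
    have hswap : swapEntries i (A ++ c :: B) = A.map (swapFun i) ++ c :: B.map (swapFun i) := by
      rw [swapEntries_eq_map, List.map_append, List.map_cons, hfc]
    have hfA : ∀ x ∈ A.map (swapFun i), x < c := by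
      rintro x hx
      obtain ⟨a, ha, rfl⟩ := List.mem_map.mp hx
      have := hA a ha
      unfold swapFun; split_ifs <;> omega
    have hfB : ∀ x ∈ B.map (swapFun i), x < c := by
      rintro x hx
      obtain ⟨a, ha, rfl⟩ := List.mem_map.mp hx
      have := hB a ha
      unfold swapFun; split_ifs <;> omega
    have hpermA := stackSort_perm A hndA
    have hpermB := stackSort_perm B hndB
    rw [hswap, stackSort_split _ _ _ hfA hfB, stackSort_split _ _ _ hA hB,
      swapEntries_eq_map, List.map_append, List.map_append, List.map_cons, hfc,
      List.map_nil]
    rcases hiAB with hiA | hiB <;> rcases hi1AB with hi1A | hi1B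
    · -- both in A
      have hiB : i ∉ B := fun h => hdisj hiA (List.mem_cons_of_mem _ h)
      have hi1B : i + 1 ∉ B := fun h => hdisj hi1A (List.mem_cons_of_mem _ h)
      have hsepA : ToggleApplies i A :=
        (toggleApplies_append_left (c :: B) hiA hi1A).mp hsep
      rw [map_swapFun_eq_self hiB hi1B,
        map_swapFun_eq_self (fun h => hiB (hpermB.mem_iff.mp h))
          (fun h => hi1B (hpermB.mem_iff.mp h))]
      rw [← swapEntries_eq_map, ← swapEntries_eq_map, ihA i hiA hi1A hsepA]
    · -- i in A, i+1 in B : use pattern lemma, no IH needed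
      have hi1A' : i + 1 ∉ A := fun h => hdisj h (List.mem_cons_of_mem _ hi1B)
      have hiB' : i ∉ B := fun h => hdisj hiA (List.mem_cons_of_mem _ h)
      rw [stackSort_map_mono _ A hndA (swapFun_mono_of_not_mem (Or.inr hi1A')),
        stackSort_map_mono _ B hndB (swapFun_mono_of_not_mem (Or.inl hiB'))]
    · -- i in B, i+1 in A
      have hiA' : i ∉ A := fun h => hdisj h (List.mem_cons_of_mem _ hiB)
      have hi1B' : i + 1 ∉ B := fun h => hdisj hi1A (List.mem_cons_of_mem _ h)
      rw [stackSort_map_mono _ A hndA (swapFun_mono_of_not_mem (Or.inl hiA')),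
        stackSort_map_mono _ B hndB (swapFun_mono_of_not_mem (Or.inr hi1B'))]
    · -- both in B
      have hiA' : i ∉ A := fun h => hdisj h (List.mem_cons_of_mem _ hiB)
      have hi1A' : i + 1 ∉ A := fun h => hdisj h (List.mem_cons_of_mem _ hi1B)
      have hsepB : ToggleApplies i B := by
        have h1 : ToggleApplies i (c :: B) :=
          (toggleApplies_append_right hnd (List.mem_cons_of_mem _ hiB)
            (List.mem_cons_of_mem _ hi1B)).mp hsep
        rw [← List.singleton_append] at h1
        have hnd2 : ([c] ++ B).Nodup := by rw [List.singleton_append]; exact hndcB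
        exact (toggleApplies_append_right hnd2 hiB hi1B).mp h1
      rw [map_swapFun_eq_self hiA' hi1A',
        map_swapFun_eq_self (fun h => hiA' (hpermA.mem_iff.mp h))
          (fun h => hi1A' (hpermA.mem_iff.mp h))]
      rw [← swapEntries_eq_map, ← swapEntries_eq_map, ihB i hiB hi1B hsepB]

/-- Lemma A: if the toggle applies to `stackSort l`, it applies to `l`. -/
lemma toggleApplies_of_stackSort :
    ∀ l : List ℕ, l.Nodup → ∀ i : ℕ, i ∈ l → i + 1 ∈ l →
      ToggleApplies i (stackSort l) → ToggleApplies i l := by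
  refine maxRec ?_ ?_
  · intro i hi _ _; exact absurd hi List.not_mem_nil
  · intro A c B hA hB hnd ihA ihB i hi hi1 hsep
    have hndA : A.Nodup := (List.nodup_append'.mp hnd).1
    have hndcB : (c :: B).Nodup := (List.nodup_append'.mp hnd).2.1
    have hndB : B.Nodup := hndcB.of_cons
    have hdisj : A.Disjoint (c :: B) := List.disjoint_of_nodup_append hnd
    have hpermA := stackSort_perm A hndA
    have hpermB := stackSort_perm B hndB
    rw [stackSort_split _ _ _ hA hB] at hsep
    rcases eq_or_ne c (i + 1) with rfl | hci1
    · exfalso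
      obtain ⟨a, ha, hlt, _, _⟩ := hsep
      rcases List.mem_append.mp ha with h | h
      · rcases List.mem_append.mp h with h | h
        · exact absurd (hA a (hpermA.mem_iff.mp h)) (by omega)
        · exact absurd (hB a (hpermB.mem_iff.mp h)) (by omega)
      · simp at h; omega
    rcases eq_or_ne c i with rfl | hci
    · exfalso
      rcases List.mem_append.mp hi1 with h | h
      · exact absurd (hA _ h) (by omega)
      · rcases List.mem_cons.mp h with h | h
        · omega
        · exact absurd (hB _ h) (by omega)
    have hiAB : i ∈ A ∨ i ∈ B := by
      rcases List.mem_append.mp hi with h | h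
      · exact Or.inl h
      · rcases List.mem_cons.mp h with h | h
        · exact absurd h.symm hci
        · exact Or.inr h
    have hi1AB : i + 1 ∈ A ∨ i + 1 ∈ B := by
      rcases List.mem_append.mp hi1 with h | h
      · exact Or.inl h
      · rcases List.mem_cons.mp h with h | h
        · exact absurd h.symm hci1
        · exact Or.inr h
    have hi1c : i + 1 < c := by
      rcases hi1AB with h | h
      · exact hA _ h
      · exact hB _ h
    rcases hiAB with hiA | hiB <;> rcases hi1AB with hi1A | hi1B
    · -- both in A
      rw [List.append_assoc] at hsep
      have hsepA : ToggleApplies i (stackSort A) :=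
        (toggleApplies_append_left (stackSort B ++ [c]) (hpermA.mem_iff.mpr hiA)
          (hpermA.mem_iff.mpr hi1A)).mp hsep
      exact (toggleApplies_append_left (c :: B) hiA hi1A).mpr (ihA i hiA hi1A hsepA)
    · -- i ∈ A, i+1 ∈ B: witness c directly
      have hcA : c ∉ A := fun h => hdisj h (List.mem_cons_self)
      have hi1A' : i + 1 ∉ A := fun h => hdisj h (List.mem_cons_of_mem _ hi1B)
      refine ⟨c, by simp, hi1c, ?_, ?_⟩
      · rw [List.idxOf_append_of_mem hiA, List.idxOf_append_of_notMem hcA,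
          List.idxOf_cons_self, List.idxOf_append_of_notMem hi1A',
          indexOf_cons_ne' B hci1]
        have := List.idxOf_lt_length_iff.mpr hiA
        omega
      · rw [List.idxOf_append_of_mem hiA, List.idxOf_append_of_notMem hcA,
          List.idxOf_cons_self, List.idxOf_append_of_notMem hi1A',
          indexOf_cons_ne' B hci1]
        have := List.idxOf_lt_length_iff.mpr hiA
        omega
    · -- i ∈ B, i+1 ∈ A
      have hcA : c ∉ A := fun h => hdisj h (List.mem_cons_self)
      have hiA' : i ∉ A := fun h => hdisj h (List.mem_cons_of_mem _ hiB)
      refine ⟨c, by simp, hi1c, ?_, ?_⟩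
      · rw [List.idxOf_append_of_mem hi1A, List.idxOf_append_of_notMem hcA,
          List.idxOf_cons_self, List.idxOf_append_of_notMem hiA',
          indexOf_cons_ne' B hci]
        have := List.idxOf_lt_length_iff.mpr hi1A
        omega
      · rw [List.idxOf_append_of_mem hi1A, List.idxOf_append_of_notMem hcA,
          List.idxOf_cons_self, List.idxOf_append_of_notMem hiA',
          indexOf_cons_ne' B hci]
        have := List.idxOf_lt_length_iff.mpr hi1A
        omega
    · -- both in B
      rw [List.append_assoc] at hsep
      have hndsl : (stackSort A ++ (stackSort B ++ [c])).Nodup := by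
        have := (stackSort_perm (A ++ c :: B) hnd).nodup_iff.mpr hnd
        rw [stackSort_split _ _ _ hA hB] at this
        rwa [List.append_assoc] at this
      have h1 : ToggleApplies i (stackSort B ++ [c]) :=
        (toggleApplies_append_right hndsl
          (List.mem_append_left _ (hpermB.mem_iff.mpr hiB))
          (List.mem_append_left _ (hpermB.mem_iff.mpr hi1B))).mp hsep
      have h2 : ToggleApplies i (stackSort B) :=
        (toggleApplies_append_left [c] (hpermB.mem_iff.mpr hiB)
          (hpermB.mem_iff.mpr hi1B)).mp h1
      have h3 : ToggleApplies i B := ihB i hiB hi1B h2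
      have h4 : ToggleApplies i (c :: B) := by
        rw [← List.singleton_append]
        have hnd2 : ([c] ++ B).Nodup := by rw [List.singleton_append]; exact hndcB
        exact (toggleApplies_append_right hnd2 hiB hi1B).mpr h3
      exact (toggleApplies_append_right hnd (List.mem_cons_of_mem _ hiB)
        (List.mem_cons_of_mem _ hi1B)).mpr h4
/-! ### Higher-order operators -/

lemma indexOf_reverse {l : List ℕ} (hnd : l.Nodup) {v : ℕ} (hv : v ∈ l) :
    l.reverse.idxOf v = l.length - 1 - l.idxOf v := by
  have hk : l.idxOf v < l.length := List.idxOf_lt_length_iff.mpr hv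
  have hrev : l.reverse.Nodup := List.nodup_reverse.mpr hnd
  have hj : l.length - 1 - l.idxOf v < l.reverse.length := by
    rw [List.length_reverse]; omega
  have hg : l.reverse[l.length - 1 - l.idxOf v]'hj = v := by
    rw [List.getElem_reverse]
    have : l.length - 1 - (l.length - 1 - l.idxOf v) = l.idxOf v := by omega
    simp only [this]
    exact List.idxOf_get (h := hk)
  conv_lhs => rw [← hg]
  exact List.Nodup.idxOf_getElem hrev _ hj

lemma toggleApplies_reverse {i : ℕ} {l : List ℕ} (hnd : l.Nodup)
    (hi : i ∈ l) (hi1 : i + 1 ∈ l) :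
    ToggleApplies i l.reverse ↔ ToggleApplies i l := by
  have key : ∀ m : List ℕ, m.Nodup → i ∈ m → i + 1 ∈ m →
      ToggleApplies i m → ToggleApplies i m.reverse := by
    rintro m hm him hi1m ⟨a, ha, hlt, hmin, hmax⟩
    have hpa : m.idxOf a < m.length := List.idxOf_lt_length_iff.mpr ha
    have hpi : m.idxOf i < m.length := List.idxOf_lt_length_iff.mpr him
    have hpi1 : m.idxOf (i + 1) < m.length := List.idxOf_lt_length_iff.mpr hi1m
    refine ⟨a, List.mem_reverse.mpr ha, hlt, ?_, ?_⟩ <;>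
      rw [indexOf_reverse hm ha, indexOf_reverse hm him, indexOf_reverse hm hi1m] <;>
      omega
  constructor
  · intro h
    have := key l.reverse (List.nodup_reverse.mpr hnd) (List.mem_reverse.mpr hi) (List.mem_reverse.mpr hi1) h
    rwa [List.reverse_reverse] at this
  · exact key l hnd hi hi1

/-- The composite operator. -/
def hop (νs : List (List ℕ → List ℕ)) : List ℕ → List ℕ := νs.foldr (· ∘ ·) stackSort

lemma hop_nil : hop [] = stackSort := rfl

lemma hop_cons (g : List ℕ → List ℕ) (t : List (List ℕ → List ℕ)) (l : List ℕ) :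
    hop (g :: t) l = g (hop t l) := rfl

lemma hop_isPermList {n : ℕ} (νs : List (List ℕ → List ℕ))
    (hν : ∀ g ∈ νs, g = stackSort ∨ g = List.reverse) {l : List ℕ} (h : IsPermList n l) :
    IsPermList n (hop νs l) := by
  induction νs with
  | nil => exact stackSort_isPermList h
  | cons g t ih =>
    have hg := hν g (by simp)
    have ht : ∀ g ∈ t, g = stackSort ∨ g = List.reverse :=
      fun g' hg' => hν g' (List.mem_cons_of_mem _ hg')
    rw [hop_cons]
    rcases hg with rfl | rfl
    · exact stackSort_isPermList (ih ht)
    · exact reverse_isPermList (ih ht)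

/-- Lemma E: the composite operator intertwines value swaps when the toggle applies
to the output. -/
lemma hop_swapEntries {n i : ℕ} (h1 : 1 ≤ i) (h2 : i + 1 ≤ n)
    (νs : List (List ℕ → List ℕ)) (hν : ∀ g ∈ νs, g = stackSort ∨ g = List.reverse)
    {l : List ℕ} (hl : IsPermList n l) (hsep : ToggleApplies i (hop νs l)) :
    hop νs (swapEntries i l) = swapEntries i (hop νs l) := by
  induction νs with
  | nil =>
    rw [hop_nil] at *
    have him : i ∈ l := hl.mem_iff_le.mpr ⟨h1, by omega⟩
    have hi1m : i + 1 ∈ l := hl.mem_iff_le.mpr ⟨by omega, h2⟩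
    exact stackSort_swapEntries l hl.nodup i him hi1m
      (toggleApplies_of_stackSort l hl.nodup i him hi1m hsep)
  | cons g t ih =>
    have hg := hν g (by simp)
    have ht : ∀ g ∈ t, g = stackSort ∨ g = List.reverse :=
      fun g' hg' => hν g' (List.mem_cons_of_mem _ hg')
    have hperm : IsPermList n (hop t l) := hop_isPermList t ht hl
    have him : i ∈ hop t l := hperm.mem_iff_le.mpr ⟨h1, by omega⟩
    have hi1m : i + 1 ∈ hop t l := hperm.mem_iff_le.mpr ⟨by omega, h2⟩
    rw [hop_cons] at hsep
    rcases hg with rfl | rfl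
    · have hsep' : ToggleApplies i (hop t l) :=
        toggleApplies_of_stackSort _ hperm.nodup i him hi1m hsep
      rw [hop_cons, hop_cons, ih ht hsep',
        stackSort_swapEntries _ hperm.nodup i him hi1m hsep']
    · have hsep' : ToggleApplies i (hop t l) :=
        (toggleApplies_reverse hperm.nodup him hi1m).mp hsep
      rw [hop_cons, hop_cons, ih ht hsep', swapEntries_eq_map, swapEntries_eq_map,
        List.map_reverse]

/-- One toggle step. -/
def TStep (n : ℕ) (a b : List ℕ) : Prop :=
  ∃ i, 1 ≤ i ∧ i + 1 ≤ n ∧ ToggleApplies i a ∧ b = swapEntries i a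

lemma TStep.isPermList {n : ℕ} {a b : List ℕ} (h : TStep n a b) (ha : IsPermList n a) :
    IsPermList n b := by
  obtain ⟨i, h1, h2, _, rfl⟩ := h
  exact swapEntries_isPermList ha h1 h2

lemma card_step {n : ℕ} {a b : List ℕ} (ha : IsPermList n a) (hstep : TStep n a b)
    (νs : List (List ℕ → List ℕ)) (hν : ∀ g ∈ νs, g = stackSort ∨ g = List.reverse) :
    Nat.card {σ : List ℕ // IsPermList n σ ∧ hop νs σ = a} =
      Nat.card {σ : List ℕ // IsPermList n σ ∧ hop νs σ = b} := by
  obtain ⟨i, h1, h2, hsep, rfl⟩ := hstep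
  refine Nat.card_congr ⟨?_, ?_, ?_, ?_⟩
  · rintro ⟨σ, hσ, hF⟩
    refine ⟨swapEntries i σ, swapEntries_isPermList hσ h1 h2, ?_⟩
    rw [hop_swapEntries h1 h2 νs hν hσ (by rw [hF]; exact hsep), hF]
  · rintro ⟨σ, hσ, hF⟩
    refine ⟨swapEntries i σ, swapEntries_isPermList hσ h1 h2, ?_⟩
    have hsep' : ToggleApplies i (swapEntries i a) :=
      (toggleApplies_swapEntries_iff i a).mpr hsep
    rw [hop_swapEntries h1 h2 νs hν hσ (by rw [hF]; exact hsep'), hF,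
      swapEntries_swapEntries]
  · rintro ⟨σ, hσ, hF⟩
    simp only [Subtype.mk.injEq]
    exact swapEntries_swapEntries i σ
  · rintro ⟨σ, hσ, hF⟩
    simp only [Subtype.mk.injEq]
    exact swapEntries_swapEntries i σ

lemma reach_isPermList {n : ℕ} {a b : List ℕ} (h : Relation.ReflTransGen (TStep n) a b)
    (ha : IsPermList n a) : IsPermList n b := by
  induction h with
  | refl => exact ha
  | tail _ hst ih => exact hst.isPermList ih

lemma card_reach {n : ℕ} {a b : List ℕ} (h : Relation.ReflTransGen (TStep n) a b)
    (ha : IsPermList n a)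
    (νs : List (List ℕ → List ℕ)) (hν : ∀ g ∈ νs, g = stackSort ∨ g = List.reverse) :
    Nat.card {σ : List ℕ // IsPermList n σ ∧ hop νs σ = a} =
      Nat.card {σ : List ℕ // IsPermList n σ ∧ hop νs σ = b} := by
  induction h with
  | refl => rfl
  | @tail b' c' hab hbc ih =>
    rw [ih, card_step (reach_isPermList hab ha) hbc νs hν]
/-! ### The output-order word and the ancestor relation -/

/-- The time-ordered list of (0-based) positions output by stack-sorting. -/
def wword (l : List ℕ) : List ℕ := (stackSort l).map (fun v => l.idxOf v)

/-- Output time of position `p`. -/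
def ofn (l : List ℕ) (p : ℕ) : ℕ := (wword l).idxOf p

/-- `p` is (the position of) an ancestor of `q` in the decreasing binary tree of `l`. -/
def AncP (l : List ℕ) (p q : ℕ) : Prop :=
  p < l.length ∧ q < l.length ∧
    ∀ r, min p q ≤ r → r ≤ max p q → l.getD r 0 ≤ l.getD p 0

lemma getd_indexOf {l : List ℕ} {v : ℕ} (hv : v ∈ l) :
    l.getD (l.idxOf v) 0 = v := by
  rw [List.getD_eq_getElem _ _ (List.idxOf_lt_length_iff.mpr hv)]
  exact List.getElem_idxOf (List.idxOf_lt_length_iff.mpr hv)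

lemma indexOf_getd {l : List ℕ} (hnd : l.Nodup) {r : ℕ} (hr : r < l.length) :
    l.idxOf (l.getD r 0) = r := by
  rw [List.getD_eq_getElem _ _ hr]
  exact List.Nodup.idxOf_getElem hnd r hr

lemma map_indexOf_self {l : List ℕ} (hnd : l.Nodup) :
    l.map (fun v => l.idxOf v) = List.range l.length := by
  apply List.ext_getElem (by simp)
  intro r h1 h2
  simp only [List.getElem_map, List.getElem_range]
  exact List.Nodup.idxOf_getElem hnd r (by simpa using h1)

lemma wword_perm_range {l : List ℕ} (hnd : l.Nodup) :
    (wword l).Perm (List.range l.length) := by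
  have h : (wword l).Perm (l.map (fun v => l.idxOf v)) :=
    (stackSort_perm l hnd).map _
  rw [map_indexOf_self hnd] at h
  exact h

lemma mem_wword {l : List ℕ} (hnd : l.Nodup) {p : ℕ} :
    p ∈ wword l ↔ p < l.length := by
  rw [(wword_perm_range hnd).mem_iff, List.mem_range]

lemma length_wword {l : List ℕ} (hnd : l.Nodup) : (wword l).length = l.length := by
  simpa using (wword_perm_range hnd).length_eq

lemma ofn_lt {l : List ℕ} (hnd : l.Nodup) {p : ℕ} (hp : p < l.length) :
    ofn l p < l.length := by
  rw [ofn, ← length_wword hnd]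
  exact List.idxOf_lt_length_iff.mpr ((mem_wword hnd).mpr hp)

/-- Decomposition of the output-order word. -/
lemma wword_split (A B : List ℕ) (c : ℕ) (hA : ∀ x ∈ A, x < c) (hB : ∀ x ∈ B, x < c)
    (hnd : (A ++ c :: B).Nodup) :
    wword (A ++ c :: B) =
      wword A ++ ((wword B).map (· + (A.length + 1)) ++ [A.length]) := by
  have hndA : A.Nodup := (List.nodup_append'.mp hnd).1
  have hndcB : (c :: B).Nodup := (List.nodup_append'.mp hnd).2.1
  have hndB : B.Nodup := hndcB.of_cons
  have hdisj : A.Disjoint (c :: B) := List.disjoint_of_nodup_append hnd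
  have hcA : c ∉ A := fun h => hdisj h (List.mem_cons_self)
  rw [wword, stackSort_split A B c hA hB, List.map_append, List.map_append,
    List.append_assoc]
  congr 1
  · apply List.map_congr_left
    intro v hv
    have hvA : v ∈ A := (stackSort_perm A hndA).mem_iff.mp hv
    exact List.idxOf_append_of_mem hvA
  congr 1
  · rw [wword, List.map_map]
    apply List.map_congr_left
    intro v hv
    have hvB : v ∈ B := (stackSort_perm B hndB).mem_iff.mp hv
    have hvnA : v ∉ A := fun h => hdisj h (List.mem_cons_of_mem _ hvB)
    have hvnc : c ≠ v := by
      rintro rfl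
      exact (List.nodup_cons.mp hndcB).1 hvB
    simp only [Function.comp_apply]
    rw [List.idxOf_append_of_notMem hvnA, indexOf_cons_ne' B hvnc]
    omega
  · simp only [List.map_cons, List.map_nil]
    rw [List.idxOf_append_of_notMem hcA, List.idxOf_cons_self]
    simp

lemma not_mem_map_add {L : List ℕ} {t p : ℕ} (hp : p < t + 1) :
    p ∉ L.map (· + (t + 1)) := by
  intro h
  obtain ⟨a, _, ha⟩ := List.mem_map.mp h
  omega

lemma ofn_split_left (A B : List ℕ) (c : ℕ) (hA : ∀ x ∈ A, x < c) (hB : ∀ x ∈ B, x < c)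
    (hnd : (A ++ c :: B).Nodup) {p : ℕ} (hp : p < A.length) :
    ofn (A ++ c :: B) p = ofn A p := by
  have hndA : A.Nodup := (List.nodup_append'.mp hnd).1
  rw [ofn, wword_split A B c hA hB hnd,
    List.idxOf_append_of_mem ((mem_wword hndA).mpr hp)]
  rfl

lemma ofn_split_mid (A B : List ℕ) (c : ℕ) (hA : ∀ x ∈ A, x < c) (hB : ∀ x ∈ B, x < c)
    (hnd : (A ++ c :: B).Nodup) :
    ofn (A ++ c :: B) A.length = A.length + B.length := by
  have hndA : A.Nodup := (List.nodup_append'.mp hnd).1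
  have hndB : B.Nodup := ((List.nodup_append'.mp hnd).2.1).of_cons
  have h1 : A.length ∉ wword A := fun h => by
    have := (mem_wword hndA).mp h; omega
  have h2 : A.length ∉ (wword B).map (· + (A.length + 1)) := not_mem_map_add (by omega)
  rw [ofn, wword_split A B c hA hB hnd, List.idxOf_append_of_notMem h1,
    List.idxOf_append_of_notMem h2, List.idxOf_cons_self, length_wword hndA]
  rw [List.length_map, length_wword hndB]
  omega

lemma ofn_split_right (A B : List ℕ) (c : ℕ) (hA : ∀ x ∈ A, x < c) (hB : ∀ x ∈ B, x < c)
    (hnd : (A ++ c :: B).Nodup) {q : ℕ} (hq : q < B.length) :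
    ofn (A ++ c :: B) (A.length + 1 + q) = A.length + ofn B q := by
  have hndA : A.Nodup := (List.nodup_append'.mp hnd).1
  have hndB : B.Nodup := ((List.nodup_append'.mp hnd).2.1).of_cons
  have h1 : A.length + 1 + q ∉ wword A := fun h => by
    have := (mem_wword hndA).mp h; omega
  have hmem : A.length + 1 + q ∈ (wword B).map (· + (A.length + 1)) := by
    refine List.mem_map.mpr ⟨q, (mem_wword hndB).mpr hq, by omega⟩
  rw [ofn, wword_split A B c hA hB hnd, List.idxOf_append_of_notMem h1,
    List.idxOf_append_of_mem hmem, length_wword hndA]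
  have : A.length + 1 + q = q + (A.length + 1) := by omega
  rw [this, indexOf_map_of_injective (add_left_injective (A.length + 1))]
  rfl
/-! ### Lemma O: AncP is determined by the output order -/

/-- The output-order characterization of the ancestor relation. -/
def OC (l : List ℕ) (p q : ℕ) : Prop :=
  p < l.length ∧ q < l.length ∧ ofn l q ≤ ofn l p ∧
    ∀ r, min p q ≤ r → r ≤ max p q → ofn l r ≤ ofn l p

lemma ancP_iff_OC : ∀ l : List ℕ, l.Nodup → ∀ p q, (AncP l p q ↔ OC l p q) := by
  refine maxRec ?_ ?_
  · intro p q
    constructor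
    · rintro ⟨hp, -, -⟩; exact absurd hp (by simp)
    · rintro ⟨hp, -, -⟩; exact absurd hp (by simp)
  · intro A c B hA hB hnd ihA ihB p q
    have hndA : A.Nodup := (List.nodup_append'.mp hnd).1
    have hndB : B.Nodup := ((List.nodup_append'.mp hnd).2.1).of_cons
    have hlen : (A ++ c :: B).length = A.length + 1 + B.length := by
      simp [List.length_append]
      omega
    have hgd_left : ∀ r, r < A.length → (A ++ c :: B).getD r 0 = A.getD r 0 :=
      fun r hr => List.getD_append A (c :: B) 0 r hr
    have hgd_mid : (A ++ c :: B).getD A.length 0 = c := by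
      rw [List.getD_append_right A (c :: B) 0 A.length (le_refl _), Nat.sub_self]
      rfl
    have hgd_right : ∀ r, (A ++ c :: B).getD (A.length + 1 + r) 0 = B.getD r 0 := by
      intro r
      rw [List.getD_append_right A (c :: B) 0 _ (by omega)]
      have : A.length + 1 + r - A.length = r + 1 := by omega
      rw [this, List.getD_cons_succ]
    have hofn_l := fun {p} (hp : p < A.length) => ofn_split_left A B c hA hB hnd hp
    have hofn_m := ofn_split_mid A B c hA hB hnd
    have hofn_r := fun {q} (hq : q < B.length) => ofn_split_right A B c hA hB hnd hq
    have hofn_lt_ne : ∀ r, r < (A ++ c :: B).length → r ≠ A.length →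
        ofn (A ++ c :: B) r < A.length + B.length := by
      intro r hr hne
      rcases Nat.lt_trichotomy r A.length with h | h | h
      · have := ofn_lt hndA h
        rw [hofn_l h]
        omega
      · exact absurd h hne
      · obtain ⟨r', rfl⟩ : ∃ r', r = A.length + 1 + r' := ⟨r - A.length - 1, by omega⟩
        have hr' : r' < B.length := by omega
        have := ofn_lt hndB hr'
        rw [hofn_r hr']
        omega
    have hofn_lt_len : ∀ r, r < (A ++ c :: B).length →
        ofn (A ++ c :: B) r < A.length + 1 + B.length := by
      intro r hr
      have := ofn_lt hnd hr
      omega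
    have hent_le : ∀ r, r < (A ++ c :: B).length → (A ++ c :: B).getD r 0 ≤ c := by
      intro r hr
      rw [List.getD_eq_getElem _ _ hr]
      have hm := List.getElem_mem hr
      rcases List.mem_append.mp hm with h | h
      · exact le_of_lt (hA _ h)
      · rcases List.mem_cons.mp h with h | h
        · omega
        · exact le_of_lt (hB _ h)
    have hent_lt : ∀ r, r < (A ++ c :: B).length → r ≠ A.length →
        (A ++ c :: B).getD r 0 < c := by
      intro r hr hne
      rcases Nat.lt_trichotomy r A.length with h | h | h
      · rw [hgd_left r h, List.getD_eq_getElem _ _ h]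
        exact hA _ (List.getElem_mem h)
      · exact absurd h hne
      · obtain ⟨r', rfl⟩ : ∃ r', r = A.length + 1 + r' := ⟨r - A.length - 1, by omega⟩
        have hr' : r' < B.length := by omega
        rw [hgd_right r', List.getD_eq_getElem _ _ hr']
        exact hB _ (List.getElem_mem hr')
    rcases Nat.lt_trichotomy p A.length with hp | hp | hp
    · rcases Nat.lt_trichotomy q A.length with hq | hq | hq
      · -- both in A
        have e1 : AncP (A ++ c :: B) p q ↔ AncP A p q := by
          constructor
          · rintro ⟨-, -, h⟩
            refine ⟨hp, hq, fun r h1 h2 => ?_⟩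
            have hr : r < A.length := by omega
            have := h r h1 h2
            rwa [hgd_left r hr, hgd_left p hp] at this
          · rintro ⟨-, -, h⟩
            refine ⟨by omega, by omega, fun r h1 h2 => ?_⟩
            have hr : r < A.length := by omega
            rw [hgd_left r hr, hgd_left p hp]
            exact h r h1 h2
        have e2 : OC (A ++ c :: B) p q ↔ OC A p q := by
          constructor
          · rintro ⟨-, -, h0, h⟩
            rw [hofn_l hq, hofn_l hp] at h0
            refine ⟨hp, hq, h0, fun r h1 h2 => ?_⟩
            have hr : r < A.length := by omega
            have := h r h1 h2
            rwa [hofn_l hr, hofn_l hp] at this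
          · rintro ⟨-, -, h0, h⟩
            rw [← hofn_l hq, ← hofn_l hp] at h0
            refine ⟨by omega, by omega, h0, fun r h1 h2 => ?_⟩
            have hr : r < A.length := by omega
            rw [hofn_l hr, hofn_l hp]
            exact h r h1 h2
        rw [e1, e2]
        exact ihA p q
      · -- p < t = q : both false
        subst hq
        refine iff_of_false ?_ ?_
        · rintro ⟨hp', -, h⟩
          have h1 := h A.length (by omega) (by omega)
          rw [hgd_mid] at h1
          have h2 := hent_lt p (by omega) (by omega)
          omega
        · rintro ⟨hp', -, h0, -⟩
          rw [hofn_m] at h0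
          have := hofn_lt_ne p (by omega) (by omega)
          omega
      · -- p < t < q : both false
        refine iff_of_false ?_ ?_
        · rintro ⟨hp', hq', h⟩
          have h1 := h A.length (by omega) (by omega)
          rw [hgd_mid] at h1
          have h2 := hent_lt p (by omega) (by omega)
          omega
        · rintro ⟨hp', hq', -, h⟩
          have h1 := h A.length (by omega) (by omega)
          rw [hofn_m] at h1
          have := hofn_lt_ne p (by omega) (by omega)
          omega
    · -- p = t : both true (given q < len)
      subst hp
      constructor
      · rintro ⟨hp', hq', -⟩
        refine ⟨hp', hq', ?_, fun r h1 h2 => ?_⟩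
        · rw [hofn_m]
          have := hofn_lt_len q hq'
          omega
        · rw [hofn_m]
          have := hofn_lt_len r (by omega)
          omega
      · rintro ⟨hp', hq', -⟩
        refine ⟨hp', hq', fun r h1 h2 => ?_⟩
        rw [hgd_mid]
        exact hent_le r (by omega)
    · rcases Nat.lt_trichotomy q A.length with hq | hq | hq
      · -- q < t < p : both false
        refine iff_of_false ?_ ?_
        · rintro ⟨hp', hq', h⟩
          have h1 := h A.length (by omega) (by omega)
          rw [hgd_mid] at h1
          have h2 := hent_lt p (by omega) (by omega)
          omega
        · rintro ⟨hp', hq', -, h⟩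
          have h1 := h A.length (by omega) (by omega)
          rw [hofn_m] at h1
          have := hofn_lt_ne p (by omega) (by omega)
          omega
      · -- t = q < p : both false
        subst hq
        refine iff_of_false ?_ ?_
        · rintro ⟨hp', -, h⟩
          have h1 := h A.length (by omega) (by omega)
          rw [hgd_mid] at h1
          have h2 := hent_lt p (by omega) (by omega)
          omega
        · rintro ⟨hp', -, h0, -⟩
          rw [hofn_m] at h0
          have := hofn_lt_ne p (by omega) (by omega)
          omega
      · -- both in B
        obtain ⟨p', rfl⟩ : ∃ p', p = A.length + 1 + p' := ⟨p - A.length - 1, by omega⟩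
        obtain ⟨q', rfl⟩ : ∃ q', q = A.length + 1 + q' := ⟨q - A.length - 1, by omega⟩
        have e1 : AncP (A ++ c :: B) (A.length + 1 + p') (A.length + 1 + q') ↔
            AncP B p' q' := by
          constructor
          · rintro ⟨hp', hq', h⟩
            refine ⟨by omega, by omega, fun r h1 h2 => ?_⟩
            have := h (A.length + 1 + r) (by omega) (by omega)
            rwa [hgd_right r, hgd_right p'] at this
          · rintro ⟨hp', hq', h⟩
            refine ⟨by omega, by omega, fun r h1 h2 => ?_⟩
            obtain ⟨r', rfl⟩ : ∃ r', r = A.length + 1 + r' := ⟨r - A.length - 1, by omega⟩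
            rw [hgd_right r', hgd_right p']
            exact h r' (by omega) (by omega)
        have e2 : OC (A ++ c :: B) (A.length + 1 + p') (A.length + 1 + q') ↔
            OC B p' q' := by
          constructor
          · rintro ⟨hp', hq', h0, h⟩
            have hpB : p' < B.length := by omega
            have hqB : q' < B.length := by omega
            rw [hofn_r hqB, hofn_r hpB] at h0
            refine ⟨hpB, hqB, by omega, fun r h1 h2 => ?_⟩
            have hrB : r < B.length := by omega
            have := h (A.length + 1 + r) (by omega) (by omega)
            rw [hofn_r hrB, hofn_r hpB] at this
            omega
          · rintro ⟨hp', hq', h0, h⟩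
            refine ⟨by omega, by omega, ?_, fun r h1 h2 => ?_⟩
            · rw [hofn_r (by omega : q' < B.length), hofn_r (by omega : p' < B.length)]
              omega
            · obtain ⟨r', rfl⟩ : ∃ r', r = A.length + 1 + r' := ⟨r - A.length - 1, by omega⟩
              have hrB : r' < B.length := by omega
              rw [hofn_r hrB, hofn_r (by omega : p' < B.length)]
              have := h r' (by omega) (by omega)
              omega
        rw [e1, e2]
        exact ihB p' q'
/-! ### skel determines wword; toggles vs the ancestor relation -/

lemma skel_eq_map {n : ℕ} {l : List ℕ} (hl : IsPermList n l) :
    skel l = (wword l).map (· + 1) := by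
  rw [skel, compw, wword, List.map_map]
  apply List.map_congr_left
  intro k hk
  have hkl : k ∈ l := (stackSort_perm l hl.nodup).mem_iff.mp hk
  have hk1 : 1 ≤ k ∧ k ≤ n := hl.mem_iff_le.mp hkl
  have hlen : l.length = n := hl.length
  have hk2 : k - 1 < (List.range' 1 l.length).length := by
    rw [List.length_range']; omega
  rw [invw, Function.comp_apply]
  rw [List.getD_eq_getElem _ _ (by simpa using hk2), List.getElem_map,
    List.getElem_range']
  have : 1 + 1 * (k - 1) = k := by omega
  rw [this]

lemma wword_eq_of_skel {n : ℕ} {l l' : List ℕ} (hl : IsPermList n l) (hl' : IsPermList n l')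
    (h : skel l = skel l') : wword l = wword l' := by
  have h1 := skel_eq_map hl
  have h2 := skel_eq_map hl'
  rw [h1, h2] at h
  exact List.map_injective_iff.mpr (add_left_injective 1) h

lemma ancP_eq_of_skel {n : ℕ} {l l' : List ℕ} (hl : IsPermList n l) (hl' : IsPermList n l')
    (h : skel l = skel l') : ∀ a b, AncP l a b ↔ AncP l' a b := by
  intro a b
  have hww := wword_eq_of_skel hl hl' h
  rw [ancP_iff_OC l hl.nodup, ancP_iff_OC l' hl'.nodup]
  unfold OC ofn
  rw [hww, hl.length, hl'.length]

/-- Lemma T: the toggle applies iff the positions of `i` and `i+1` are incomparable. -/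
lemma toggleApplies_iff_not_ancP {n i : ℕ} {l : List ℕ} (hl : IsPermList n l)
    (h1 : 1 ≤ i) (h2 : i + 1 ≤ n) :
    ToggleApplies i l ↔ ¬ AncP l (l.idxOf (i + 1)) (l.idxOf i) := by
  have hnd := hl.nodup
  have hi : i ∈ l := hl.mem_iff_le.mpr ⟨h1, by omega⟩
  have hi1 : i + 1 ∈ l := hl.mem_iff_le.mpr ⟨by omega, h2⟩
  have hp : l.idxOf i < l.length := List.idxOf_lt_length_iff.mpr hi
  have hq : l.idxOf (i + 1) < l.length := List.idxOf_lt_length_iff.mpr hi1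
  have hgp : l.getD (l.idxOf i) 0 = i := getd_indexOf hi
  have hgq : l.getD (l.idxOf (i + 1)) 0 = i + 1 := getd_indexOf hi1
  constructor
  · rintro ⟨a, ha, hlt, hmin, hmax⟩ ⟨-, -, h⟩
    have hia : l.idxOf a < l.length := List.idxOf_lt_length_iff.mpr ha
    have := h (l.idxOf a) (by omega) (by omega)
    rw [getd_indexOf ha, hgq] at this
    omega
  · intro hnot
    rw [AncP] at hnot
    push_neg at hnot
    obtain ⟨r, hr1, hr2, hr3⟩ := hnot hq hp
    rw [hgq] at hr3
    have hrlen : r < l.length := by omega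
    set a := l.getD r 0 with hadef
    have ham : a ∈ l := by
      rw [hadef, List.getD_eq_getElem _ _ hrlen]
      exact List.getElem_mem hrlen
    have hidxa : l.idxOf a = r := indexOf_getd hnd hrlen
    have hrp : r ≠ l.idxOf i := by
      intro hr
      rw [← hr] at hgp  -- careful
      omega
    have hrq : r ≠ l.idxOf (i + 1) := by
      intro hr
      rw [← hr] at hgq
      omega
    exact ⟨a, ham, by omega, by omega, by omega⟩

/-- Key half of Lemma G. -/
lemma ancP_swapEntries_of_ancP {i : ℕ} {l : List ℕ} (hnd : l.Nodup)
    (hsep : ToggleApplies i l) (hi : i ∈ l) (hi1 : i + 1 ∈ l) {a b : ℕ}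
    (h : AncP l a b) : AncP (swapEntries i l) a b := by
  obtain ⟨ha, hb, hf⟩ := h
  have hlen : (swapEntries i l).length = l.length := by
    rw [swapEntries_eq_map, List.length_map]
  have hgd_swap : ∀ r, r < l.length →
      (swapEntries i l).getD r 0 = swapFun i (l.getD r 0) := by
    intro r hr
    rw [swapEntries_eq_map, List.getD_eq_getElem _ _ (by simpa using hr),
      List.getElem_map, List.getD_eq_getElem _ _ hr]
  have hgp : l.getD (l.idxOf i) 0 = i := getd_indexOf hi
  have hgq : l.getD (l.idxOf (i + 1)) 0 = i + 1 := getd_indexOf hi1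
  have hp : l.idxOf i < l.length := List.idxOf_lt_length_iff.mpr hi
  have hq : l.idxOf (i + 1) < l.length := List.idxOf_lt_length_iff.mpr hi1
  refine ⟨by omega, by omega, fun r h1 h2 => ?_⟩
  have hr : r < l.length := by omega
  rw [hgd_swap r hr, hgd_swap a (by omega)]
  have hvr := hf r h1 h2
  set va := l.getD a 0 with hva
  set vr := l.getD r 0 with hvrd
  have hva_eq : va = i → a = l.idxOf i := by
    intro hv; rw [← indexOf_getd hnd (show a < l.length by omega), ← hva, hv]
  have hva_eq1 : va = i + 1 → a = l.idxOf (i + 1) := by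
    intro hv; rw [← indexOf_getd hnd (show a < l.length by omega), ← hva, hv]
  have hvr_eq : vr = i → r = l.idxOf i := by
    intro hv; rw [← indexOf_getd hnd hr, ← hvrd, hv]
  have hvr_eq1 : vr = i + 1 → r = l.idxOf (i + 1) := by
    intro hv; rw [← indexOf_getd hnd hr, ← hvrd, hv]
  rcases eq_or_ne va i with hvai | hvai
  · -- a is the position of i; then q outside the interval
    have haq : vr ≠ i + 1 := by
      intro hv
      have := hvr_eq1 hv
      subst this
      omega
    unfold swapFun
    split_ifs <;> omega
  · rcases eq_or_ne va (i + 1) with hvai1 | hvai1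
    · -- a is the position of i+1; p outside the interval thanks to Sep
      have harp : vr ≠ i := by
        intro hv
        have hreq := hvr_eq hv
        -- r = indexOf i ∈ [min a b, max a b]; the separating witness contradicts
        obtain ⟨w, hw, hwlt, hwmin, hwmax⟩ := hsep
        have haeq : a = l.idxOf (i + 1) := hva_eq1 hvai1
        have hwidx : l.idxOf w < l.length := List.idxOf_lt_length_iff.mpr hw
        have hcontr := hf (l.idxOf w) (by omega) (by omega)
        rw [getd_indexOf hw] at hcontr
        omega
      unfold swapFun
      split_ifs <;> omega
    · unfold swapFun
      split_ifs <;> omega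

/-- Lemma G: a toggle that applies does not change the ancestor relation. -/
lemma ancP_swapEntries_iff {i : ℕ} {l : List ℕ} (hnd : l.Nodup)
    (hsep : ToggleApplies i l) (hi : i ∈ l) (hi1 : i + 1 ∈ l) (a b : ℕ) :
    AncP (swapEntries i l) a b ↔ AncP l a b := by
  constructor
  · intro h
    have hnd' : (swapEntries i l).Nodup := by
      rw [swapEntries_eq_map]
      exact hnd.map_on (fun x _ y _ h => swapFun_injective i h)
    have hi' : i ∈ swapEntries i l := by
      rw [swapEntries_eq_map]
      exact List.mem_map.mpr ⟨i + 1, hi1, by simp [swapFun]⟩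
    have hi1' : i + 1 ∈ swapEntries i l := by
      rw [swapEntries_eq_map]
      exact List.mem_map.mpr ⟨i, hi, by simp [swapFun]⟩
    have hsep' : ToggleApplies i (swapEntries i l) :=
      (toggleApplies_swapEntries_iff i l).mpr hsep
    have := ancP_swapEntries_of_ancP hnd' hsep' hi' hi1' h
    rwa [swapEntries_swapEntries] at this
  · exact ancP_swapEntries_of_ancP hnd hsep hi hi1
/-! ### Connectivity: equal skeletons are linked by toggles -/

lemma getd_swapEntries (i : ℕ) (l : List ℕ) {r : ℕ} (hr : r < l.length) :
    (swapEntries i l).getD r 0 = swapFun i (l.getD r 0) := by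
  rw [swapEntries_eq_map, List.getD_eq_getElem _ _ (by simpa using hr),
    List.getElem_map, List.getD_eq_getElem _ _ hr]

lemma eq_of_agree {n : ℕ} {l l' : List ℕ} (hl : IsPermList n l) (hl' : IsPermList n l')
    (h : ∀ v, 1 ≤ v → v ≤ n → l.idxOf v = l'.idxOf v) : l = l' := by
  apply List.ext_getElem (by rw [hl.length, hl'.length])
  intro r h1 h2
  have hv : l[r] ∈ l := List.getElem_mem h1
  obtain ⟨hb1, hb2⟩ := hl.mem_iff_le.mp hv
  have hidx : l.idxOf l[r] = r := List.Nodup.idxOf_getElem hl.nodup r h1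
  have hidx' : l'.idxOf l[r] = r := by rw [← h _ hb1 hb2, hidx]
  have hmem' : l[r] ∈ l' := hl'.mem_iff_le.mpr ⟨hb1, hb2⟩
  have := getd_indexOf hmem'
  rw [hidx'] at this
  rw [List.getD_eq_getElem _ _ h2] at this
  exact this.symm

lemma ancP_getd_le {l : List ℕ} {p q : ℕ} (h : AncP l p q) :
    l.getD q 0 ≤ l.getD p 0 := by
  obtain ⟨hp, hq, hf⟩ := h
  exact hf q (by omega) (by omega)

/-- The marching lemma: raise the value at position `x` up to `k+1` by toggles. -/
lemma march {n k x : ℕ} {π' : List ℕ} (hπ' : IsPermList n π') (hk : k + 1 ≤ n)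
    (hx : x = π'.idxOf (k + 1)) :
    ∀ d (l : List ℕ), IsPermList n l → (∀ a b, AncP l a b ↔ AncP π' a b) →
      (∀ v, k + 1 < v → v ≤ n → l.idxOf v = π'.idxOf v) →
      k + 1 ≤ l.getD x 0 + d →
      ∃ l2, Relation.ReflTransGen (TStep n) l l2 ∧ IsPermList n l2 ∧
        (∀ a b, AncP l2 a b ↔ AncP π' a b) ∧
        (∀ v, k < v → v ≤ n → l2.idxOf v = π'.idxOf v) := by
  have hk1m' : k + 1 ∈ π' := hπ'.mem_iff_le.mpr ⟨by omega, hk⟩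
  have hxlen : x < n := by
    rw [hx, ← hπ'.length]
    exact List.idxOf_lt_length_iff.mpr hk1m'
  have hgx' : π'.getD x 0 = k + 1 := by rw [hx]; exact getd_indexOf hk1m'
  intro d
  induction d with
  | zero =>
    intro l hl hanc hag hmeas
    -- here l.getD x 0 ≥ k+1, and it is ≤ k+1, so equals k+1
    have hxl : x < l.length := by rw [hl.length]; exact hxlen
    set j := l.getD x 0 with hj
    have hjmem : j ∈ l := by
      rw [hj, List.getD_eq_getElem _ _ hxl]; exact List.getElem_mem hxl
    have hjx : l.idxOf j = x := indexOf_getd hl.nodup hxl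
    have hjk : j ≤ k + 1 := by
      by_contra hc
      push_neg at hc
      have h1 : l.idxOf j = π'.idxOf j := hag j hc (hl.mem_iff_le.mp hjmem).2
      have h2 : π'.getD (π'.idxOf j) 0 = j :=
        getd_indexOf (hπ'.mem_iff_le.mpr (hl.mem_iff_le.mp hjmem))
      rw [← h1, hjx] at h2
      omega
    have hjeq : j = k + 1 := by omega
    refine ⟨l, Relation.ReflTransGen.refl, hl, hanc, fun v hv1 hv2 => ?_⟩
    rcases eq_or_lt_of_le (Nat.succ_le_of_lt hv1) with hv | hv
    · have hveq : v = k + 1 := by omega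
      subst hveq
      have h5 : List.idxOf (k + 1) l = x := by rw [← hjeq]; exact hjx
      rw [h5, hx]
    · exact hag v hv hv2
  | succ d ih =>
    intro l hl hanc hag hmeas
    have hxl : x < l.length := by rw [hl.length]; exact hxlen
    set j := l.getD x 0 with hj
    have hjmem : j ∈ l := by
      rw [hj, List.getD_eq_getElem _ _ hxl]; exact List.getElem_mem hxl
    have hjx : l.idxOf j = x := indexOf_getd hl.nodup hxl
    obtain ⟨hj1, hjn⟩ := hl.mem_iff_le.mp hjmem
    have hjk : j ≤ k + 1 := by
      by_contra hc
      push_neg at hc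
      have h1 : l.idxOf j = π'.idxOf j := hag j hc hjn
      have h2 : π'.getD (π'.idxOf j) 0 = j :=
        getd_indexOf (hπ'.mem_iff_le.mpr ⟨hj1, hjn⟩)
      rw [← h1, hjx] at h2
      omega
    rcases eq_or_lt_of_le hjk with hjeq | hjlt
    · refine ⟨l, Relation.ReflTransGen.refl, hl, hanc, fun v hv1 hv2 => ?_⟩
      rcases eq_or_lt_of_le (Nat.succ_le_of_lt hv1) with hv | hv
      · have hveq : v = k + 1 := by omega
        subst hveq
        have h5 : List.idxOf (k + 1) l = x := by rw [← hjeq]; exact hjx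
        rw [h5, hx]
      · exact hag v hv hv2
    · -- j < k+1;  toggle (j, j+1)
      have hj1n : j + 1 ≤ n := by omega
      have hj1mem : j + 1 ∈ l := hl.mem_iff_le.mpr ⟨by omega, hj1n⟩
      set y := l.idxOf (j + 1) with hy
      have hyl : y < l.length := List.idxOf_lt_length_iff.mpr hj1mem
      have hgy : l.getD y 0 = j + 1 := getd_indexOf hj1mem
      have hsep : ToggleApplies j l := by
        rw [toggleApplies_iff_not_ancP hl hj1 hj1n, ← hy, hjx]
        intro hancl
        have hanc' : AncP π' y x := (hanc y x).mp hancl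
        have hvy0 := ancP_getd_le hanc'
        rw [hgx'] at hvy0
        have hylen' : y < π'.length := hanc'.1
        set vy := π'.getD y 0 with hvy
        have hvymem : vy ∈ π' := by
          rw [hvy, List.getD_eq_getElem _ _ hylen']; exact List.getElem_mem hylen'
        have hvyn : vy ≤ n := (hπ'.mem_iff_le.mp hvymem).2
        have hyvy : π'.idxOf vy = y := indexOf_getd hπ'.nodup hylen'
        rcases eq_or_lt_of_le hvy0 with hveq | hvlt
        · -- vy = k+1 forces y = x, impossible
          have hxy : x = y := by rw [hx, hveq, hyvy]
          have hcontr : l.getD x 0 = l.getD y 0 := by rw [hxy]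
          omega
        · have h1 : l.idxOf vy = π'.idxOf vy :=
            hag vy hvlt hvyn
          rw [hyvy] at h1
          have h2 : l.getD y 0 = vy := by
            rw [← h1]; exact getd_indexOf (hl.mem_iff_le.mpr ⟨by omega, hvyn⟩)
          omega
      have hstep : TStep n l (swapEntries j l) := ⟨j, hj1, hj1n, hsep, rfl⟩
      have hl2 : IsPermList n (swapEntries j l) := swapEntries_isPermList hl hj1 hj1n
      have hanc2 : ∀ a b, AncP (swapEntries j l) a b ↔ AncP π' a b := fun a b =>
        (ancP_swapEntries_iff hl.nodup hsep hjmem hj1mem a b).trans (hanc a b)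
      have hag2 : ∀ v, k + 1 < v → v ≤ n → (swapEntries j l).idxOf v = π'.idxOf v := by
        intro v hv1 hv2
        rw [indexOf_swapEntries_other j v l (by omega) (by omega)]
        exact hag v hv1 hv2
      have hmeas2 : k + 1 ≤ (swapEntries j l).getD x 0 + d := by
        rw [getd_swapEntries j l hxl, ← hj]
        have : swapFun j j = j + 1 := by simp [swapFun]
        rw [this]
        omega
      obtain ⟨l2, hreach, h2, h3, h4⟩ := ih (swapEntries j l) hl2 hanc2 hag2 hmeas2
      exact ⟨l2, Relation.ReflTransGen.head hstep hreach, h2, h3, h4⟩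

lemma conn {n : ℕ} {π' : List ℕ} (hπ' : IsPermList n π') :
    ∀ k (l : List ℕ), IsPermList n l → (∀ a b, AncP l a b ↔ AncP π' a b) →
      (∀ v, k < v → v ≤ n → l.idxOf v = π'.idxOf v) →
      Relation.ReflTransGen (TStep n) l π' := by
  intro k
  induction k with
  | zero =>
    intro l hl _ hag
    rw [eq_of_agree hl hπ' (fun v hv1 hv2 => hag v hv1 hv2)]
  | succ k ih =>
    intro l hl hanc hag
    by_cases hkn : k + 1 ≤ n
    · obtain ⟨l2, hreach, h2, h3, h4⟩ :=
        march hπ' hkn rfl (k + 1) l hl hanc (fun v h1 h2 => hag v h1 h2) (by omega)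
      exact hreach.trans (ih l2 h2 h3 h4)
    · exact ih l hl hanc (fun v hv1 hv2 => hag v (by omega) hv2)
/-- For any higher-order twisted stack-sorting operator `𝔰 = νₘ ∘ ⋯ ∘ ν₂ ∘ s`
(each `νⱼ ∈ {s, rev}`), permutations with the same skeleton have the same number of
preimages under `𝔰`. -/
theorem higher_order_fertility_skeletal (n : ℕ) (π π' : List ℕ)
    (hπ : IsPermList n π) (hπ' : IsPermList n π') (hsk : skel π = skel π')
    (νs : List (List ℕ → List ℕ)) (hν : ∀ g ∈ νs, g = stackSort ∨ g = List.reverse) :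
    Nat.card {σ : List ℕ // IsPermList n σ ∧ νs.foldr (· ∘ ·) stackSort σ = π} =
      Nat.card {σ : List ℕ // IsPermList n σ ∧ νs.foldr (· ∘ ·) stackSort σ = π'} := by
  have hanc := ancP_eq_of_skel hπ hπ' hsk
  have hreach : Relation.ReflTransGen (TStep n) π π' :=
    conn hπ' n π hπ hanc (fun v hv1 hv2 => absurd hv1 (by omega))
  exact card_reach hreach hπ νs hν
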